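/- Failure of the linear Bures–trace bound for non-full-rank states: Let σ ∈ S_d be a density matrix that does not have full rank, and let ρ ∈ S_d satisfy ρσ = 0. For δ ∈ [0,1] set ρ_δ = δρ + (1−δ)σ. Then d_tr(ρ_δ, σ) = δ and F(ρ_δ, σ) = √(1−δ), and consequently d_tr(ρ_δ, σ) ≤ 2 d_B²(ρ_δ, σ) for all δ ∈ [0,1]. In particular, there exist no constants C, ε > 0 such that d_B(ρ', σ) ≤ C d_tr(ρ', σ) holds for all ρ' ∈ S_d with d_tr(ρ', σ) < ε. -/

import Mathlib

open scoped Matrix ComplexOrder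
open Matrix

section Defs

variable {m : Type*}

/-- The trace norm `‖X‖₁ = tr √(XᴴX)`. -/
noncomputable def traceNorm [Fintype m] [DecidableEq m] (X : Matrix m m ℂ) : ℝ :=
  (((Matrix.posSemidef_conjTranspose_mul_self X).1.eigenvectorUnitary.1 *
      diagonal (((↑) : ℝ → ℂ) ∘ (√·) ∘ (Matrix.posSemidef_conjTranspose_mul_self X).1.eigenvalues) *
      (star (Matrix.posSemidef_conjTranspose_mul_self X).1.eigenvectorUnitary : Matrix m m ℂ)).trace).re

/-- The trace distance `d_tr(ρ,σ) = ‖ρ - σ‖₁ / 2`. -/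
noncomputable def trDist [Fintype m] [DecidableEq m] (ρ σ : Matrix m m ℂ) : ℝ :=
  traceNorm (ρ - σ) / 2

/-- A density matrix: positive semidefinite (hence Hermitian) with unit trace. -/
def IsDensityMatrix [Fintype m] (ρ : Matrix m m ℂ) : Prop :=
  ρ.PosSemidef ∧ ρ.trace = 1

/-- Apply a superoperator, given by its matrix representation
(rows/columns indexed by matrix entry positions), to a matrix. -/
noncomputable def appS [Fintype m] (S : Matrix (m × m) (m × m) ℂ) (ρ : Matrix m m ℂ) :
    Matrix m m ℂ :=
  Matrix.of fun i j => ∑ p : m × m, S (i, j) p * ρ p.1 p.2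

/-- The Choi matrix of a superoperator. -/
def choiMatrix [Fintype m] (S : Matrix (m × m) (m × m) ℂ) : Matrix (m × m) (m × m) ℂ :=
  Matrix.of fun p q => S (p.2, q.2) (p.1, q.1)

/-- Quantum channel: completely positive (positive semidefinite Choi matrix)
and trace preserving. -/
def IsQChannelM [Fintype m] (S : Matrix (m × m) (m × m) ℂ) : Prop :=
  (choiMatrix S).PosSemidef ∧ ∀ X : Matrix m m ℂ, (appS S X).trace = X.trace

/-- `expS t L` is the superoperator `e^{tL}`. -/
noncomputable def expS [Fintype m] [DecidableEq m] (t : ℝ) (L : Matrix (m × m) (m × m) ℂ) :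
    Matrix (m × m) (m × m) ℂ :=
  NormedSpace.exp ((t : ℂ) • L)

/-- A Liouvillian: `e^{tL}` is a quantum channel for every `t ≥ 0`. -/
def IsLiouvillianM [Fintype m] [DecidableEq m] (L : Matrix (m × m) (m × m) ℂ) : Prop :=
  ∀ t : ℝ, 0 ≤ t → IsQChannelM (expS t L)

/-- `lam` is the spectral gap of the Liouvillian `L`:
`lam = inf {|Re μ| : μ eigenvalue of L, Re μ < 0}` (and such an eigenvalue exists). -/
def IsGapOf [Fintype m] [DecidableEq m] (L : Matrix (m × m) (m × m) ℂ) (lam : ℝ) : Prop :=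
  (∃ μ ∈ spectrum ℂ L, μ.re < 0) ∧
  lam = sInf {r : ℝ | ∃ μ ∈ spectrum ℂ L, μ.re < 0 ∧ r = -μ.re}

/-- `Tφ` is the peripheral evolution `T_{φ,t} = Σ_{k : Re λ_k = 0} e^{tλ_k} P_k` of the
semigroup generated by `L`: it acts as `e^{tμ}` on each generalized eigenspace of `L` with
`Re μ = 0`, and as `0` on each generalized eigenspace with `Re μ < 0`. -/
def IsPeriphEvolAt [Fintype m] (L : Matrix (m × m) (m × m) ℂ) (t : ℝ)
    (Tφ : Matrix (m × m) (m × m) ℂ) : Prop :=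
  (∀ μ : ℂ, μ.re = 0 → ∀ v ∈ Module.End.maxGenEigenspace (Matrix.mulVecLin L) μ,
      Tφ.mulVec v = Complex.exp (t * μ) • v) ∧
  (∀ μ : ℂ, μ.re < 0 → ∀ v ∈ Module.End.maxGenEigenspace (Matrix.mulVecLin L) μ,
      Tφ.mulVec v = 0)

/-- `Tφ` is the peripheral projection `T_φ = Σ_{k : |μ_k| = 1} μ_k P_k` of the channel `T`:
it acts as `μ •` on each generalized eigenspace of `T` with `|μ| = 1`, and as `0` on each
generalized eigenspace with `|μ| < 1`. -/
def IsPeriphProjM [Fintype m] (T Tφ : Matrix (m × m) (m × m) ℂ) : Prop :=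
  (∀ μ : ℂ, ‖μ‖ = 1 → ∀ v ∈ Module.End.maxGenEigenspace (Matrix.mulVecLin T) μ,
      Tφ.mulVec v = μ • v) ∧
  (∀ μ : ℂ, ‖μ‖ < 1 → ∀ v ∈ Module.End.maxGenEigenspace (Matrix.mulVecLin T) μ,
      Tφ.mulVec v = 0)

/-- The trace-norm contraction `η_tr[T] = sup_ρ d_tr(T(ρ), Tφ(ρ))` over density matrices. -/
noncomputable def etaTR [Fintype m] [DecidableEq m] (T Tφ : Matrix (m × m) (m × m) ℂ) : ℝ :=
  ⨆ ρ : {ρ : Matrix m m ℂ // IsDensityMatrix ρ}, trDist (appS T ρ.1) (appS Tφ ρ.1)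

open scoped Classical in
/-- Matrix square root of a positive semidefinite matrix (junk value `0` otherwise). -/
noncomputable def msqrt [Fintype m] [DecidableEq m] (A : Matrix m m ℂ) : Matrix m m ℂ :=
  if h : A.PosSemidef then
    h.1.eigenvectorUnitary.1 * diagonal ((↑) ∘ (√·) ∘ h.1.eigenvalues) *
      (star h.1.eigenvectorUnitary : Matrix m m ℂ)
  else 0

/-- The fidelity `F(ρ,σ) = tr √(√ρ σ √ρ)`. -/
noncomputable def fidelity [Fintype m] [DecidableEq m] (ρ σ : Matrix m m ℂ) : ℝ :=
  ((msqrt (msqrt ρ * σ * msqrt ρ)).trace).re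

/-- The Bures distance `d_B(ρ,σ) = √(1 - F(ρ,σ))`. -/
noncomputable def buresDist [Fintype m] [DecidableEq m] (ρ σ : Matrix m m ℂ) : ℝ :=
  Real.sqrt (1 - fidelity ρ σ)

/-- The Frobenius (Hilbert-Schmidt) norm `‖X‖₂ = √(tr XᴴX)`. -/
noncomputable def frobNorm [Fintype m] (X : Matrix m m ℂ) : ℝ :=
  Real.sqrt ((Xᴴ * X).trace.re)

/-- The operator (spectral) norm `‖A‖_∞`. -/
noncomputable def specNorm [Fintype m] [DecidableEq m] (A : Matrix m m ℂ) : ℝ :=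
  ‖(Matrix.toEuclideanLin A).toContinuousLinearMap‖

/-- The superoperator norm `‖S‖_{2→2} = sup {‖S(X)‖₂ : ‖X‖₂ ≤ 1}` induced by the
Frobenius norm. -/
noncomputable def superNorm22 [Fintype m] (S : Matrix (m × m) (m × m) ℂ) : ℝ :=
  ⨆ X : {X : Matrix m m ℂ // frobNorm X ≤ 1}, frobNorm (appS S X.1)

/-- The dual (Heisenberg-picture) superoperator `S*`, satisfying
`tr[A S*(B)] = tr[S(A) B]`. -/
def dualS [Fintype m] (S : Matrix (m × m) (m × m) ℂ) : Matrix (m × m) (m × m) ℂ :=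
  Matrix.of fun p q => S (q.2, q.1) (p.2, p.1)

/-- Matrix representation of the superoperator `ρ ↦ A ρ B`. -/
def sandwichS [Fintype m] (A B : Matrix m m ℂ) : Matrix (m × m) (m × m) ℂ :=
  Matrix.of fun p q => A p.1 q.1 * B q.2 p.2

/-- The Lindblad dissipator `ρ ↦ L ρ L† − (1/2)L†L ρ − (1/2)ρ L†L` in matrix
representation. -/
noncomputable def lindbladTermS [Fintype m] [DecidableEq m] (L : Matrix m m ℂ) :
    Matrix (m × m) (m × m) ℂ :=
  sandwichS L Lᴴ - (1 / 2 : ℂ) • sandwichS (Lᴴ * L) 1 - (1 / 2 : ℂ) • sandwichS 1 (Lᴴ * L)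

/-- Tensor (Kronecker) product of two superoperators. -/
def kronS {m' : Type*} [Fintype m] [Fintype m'] (S : Matrix (m × m) (m × m) ℂ)
    (S' : Matrix (m' × m') (m' × m') ℂ) :
    Matrix ((m × m') × (m × m')) ((m × m') × (m × m')) ℂ :=
  Matrix.of fun p q =>
    S (p.1.1, p.2.1) (q.1.1, q.2.1) * S' (p.1.2, p.2.2) (q.1.2, q.2.2)

end Defs

/-- `n`-fold tensor power `S^{⊗n}` of a superoperator on `M_d`. -/
noncomputable def tensorPowS (n : ℕ) {d : ℕ} (S : Matrix (Fin d × Fin d) (Fin d × Fin d) ℂ) :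
    Matrix ((Fin n → Fin d) × (Fin n → Fin d)) ((Fin n → Fin d) × (Fin n → Fin d)) ℂ :=
  Matrix.of fun p q => ∏ i, S (p.1 i, p.2 i) (q.1 i, q.2 i)

/-- `n`-fold tensor power `ρ^{⊗n}` of a matrix. -/
noncomputable def tensorPowM (n : ℕ) {d : ℕ} (ρ : Matrix (Fin d) (Fin d) ℂ) :
    Matrix (Fin n → Fin d) (Fin n → Fin d) ℂ :=
  Matrix.of fun x y => ∏ i, ρ (x i) (y i)

/-- Tensor product `A 0 ⊗ A 1 ⊗ … ⊗ A (n-1)` of a family of matrices. -/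
noncomputable def tensorFamilyM {n d : ℕ} (A : Fin n → Matrix (Fin d) (Fin d) ℂ) :
    Matrix (Fin n → Fin d) (Fin n → Fin d) ℂ :=
  Matrix.of fun x y => ∏ i, A i (x i) (y i)

namespace Matrix.PosSemidef
variable {m : Type*} [Fintype m] [DecidableEq m]

noncomputable def sqrt {A : Matrix m m ℂ} (hA : A.PosSemidef) : Matrix m m ℂ :=
  hA.1.eigenvectorUnitary.1 * diagonal (((↑) : ℝ → ℂ) ∘ (√·) ∘ hA.1.eigenvalues) *
    (star hA.1.eigenvectorUnitary : Matrix m m ℂ)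

open scoped MatrixOrder in
lemma sqrt_eq_cfc {A : Matrix m m ℂ} (hA : A.PosSemidef) : hA.sqrt = CFC.sqrt A := by
  have h0 : (0 : Matrix m m ℂ) ≤ A := Matrix.nonneg_iff_posSemidef.mpr hA
  rw [CFC.sqrt_eq_real_sqrt A h0, cfcₙ_eq_cfc, hA.1.cfc_eq, IsHermitian.cfc,
    Unitary.conjStarAlgAut_apply]
  rfl

open scoped MatrixOrder in
lemma posSemidef_sqrt {A : Matrix m m ℂ} (hA : A.PosSemidef) : hA.sqrt.PosSemidef := by
  rw [sqrt_eq_cfc, ← Matrix.nonneg_iff_posSemidef]; exact CFC.sqrt_nonneg A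

open scoped MatrixOrder in
lemma sqrt_mul_self {A : Matrix m m ℂ} (hA : A.PosSemidef) : hA.sqrt * hA.sqrt = A := by
  rw [sqrt_eq_cfc]; exact CFC.sqrt_mul_sqrt_self A (Matrix.nonneg_iff_posSemidef.mpr hA)

open scoped MatrixOrder in
lemma eq_sqrt_of_sq_eq {A B : Matrix m m ℂ} (hB : B.PosSemidef) (hA : A.PosSemidef)
    (h : B ^ 2 = A) : B = hA.sqrt := by
  rw [sqrt_eq_cfc]
  exact (CFC.sqrt_unique (by rw [← h, pow_two]) (Matrix.nonneg_iff_posSemidef.mpr hB)).symm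

end Matrix.PosSemidef

lemma traceNorm_eq_sqrt {m : Type*} [Fintype m] [DecidableEq m] (X : Matrix m m ℂ) :
    traceNorm X = ((Matrix.posSemidef_conjTranspose_mul_self X).sqrt.trace).re := rfl

set_option linter.unusedSectionVars false

set_option linter.unusedSectionVars false

section Aux
variable {m : Type*} [Fintype m] [DecidableEq m]

/-- PSD matrix scaled by a nonneg real is PSD. -/
lemma psd_smul {A : Matrix m m ℂ} (hA : A.PosSemidef) {c : ℝ} (hc : 0 ≤ c) :
    ((c : ℂ) • A).PosSemidef := by
  exact hA.smul (Complex.zero_le_real.mpr hc)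

lemma mat_eq_zero_of_trace_conj {X : Matrix m m ℂ} (h : (Xᴴ * X).trace = 0) : X = 0 := by
  have hre : ∑ i, ∑ j, Complex.normSq (X j i) = 0 := by
    have := congrArg Complex.re h
    rw [Matrix.trace] at this
    simpa [Matrix.mul_apply, Matrix.diag, Matrix.conjTranspose_apply, Complex.normSq_apply,
      Complex.mul_re, Complex.re_sum, mul_comm] using this
  ext i j
  have h1 : ∀ i ∈ Finset.univ, (0:ℝ) ≤ ∑ j, Complex.normSq (X j i) :=
    fun i _ => Finset.sum_nonneg fun j _ => Complex.normSq_nonneg _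
  have h2 := (Finset.sum_eq_zero_iff_of_nonneg h1).mp hre j (Finset.mem_univ _)
  have h3 := (Finset.sum_eq_zero_iff_of_nonneg
    (fun k _ => Complex.normSq_nonneg (X k j))).mp h2 i (Finset.mem_univ _)
  simpa using Complex.normSq_eq_zero.mp h3

/-- If `A B` PSD with `A * B = 0` then `√A * √B = 0`. -/
lemma sqrt_mul_sqrt_eq_zero {A B : Matrix m m ℂ} (hA : A.PosSemidef) (hB : B.PosSemidef)
    (hAB : A * B = 0) : hA.sqrt * hB.sqrt = 0 := by
  set a := hA.sqrt with ha
  set b := hB.sqrt with hb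
  have haH : aᴴ = a := hA.posSemidef_sqrt.1
  have hbH : bᴴ = b := hB.posSemidef_sqrt.1
  apply mat_eq_zero_of_trace_conj
  have : (a * b)ᴴ * (a * b) = b * A * b := by
    rw [conjTranspose_mul, haH, hbH]
    calc b * a * (a * b) = b * (a * a) * b := by noncomm_ring
    _ = b * A * b := by rw [hA.sqrt_mul_self]
  rw [this, Matrix.trace_mul_cycle, hb, hB.sqrt_mul_self, Matrix.trace_mul_comm, hAB,
    Matrix.trace_zero]

end Aux

lemma key_calc {d : ℕ} (σ ρ : Matrix (Fin d) (Fin d) ℂ)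
    (hσ : IsDensityMatrix σ) (hρ : IsDensityMatrix ρ)
    (horth : ρ * σ = 0) (δ : ℝ) (h0 : 0 ≤ δ) (h1 : δ ≤ 1) :
    IsDensityMatrix ((δ : ℂ) • ρ + (1 - (δ : ℂ)) • σ) ∧
    trDist ((δ : ℂ) • ρ + (1 - (δ : ℂ)) • σ) σ = δ ∧
    fidelity ((δ : ℂ) • ρ + (1 - (δ : ℂ)) • σ) σ = Real.sqrt (1 - δ) := by
  have h1δ : (0:ℝ) ≤ 1 - δ := by linarith
  have hsr : σ * ρ = 0 := by
    have := congrArg Matrix.conjTranspose horth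
    rwa [Matrix.conjTranspose_mul, hρ.1.1.eq, hσ.1.1.eq, Matrix.conjTranspose_zero] at this
  have hcast : (1 - (δ:ℂ)) = ((1 - δ : ℝ) : ℂ) := by push_cast; ring
  -- PSD and density
  have hρδpsd : ((δ : ℂ) • ρ + (1 - (δ : ℂ)) • σ).PosSemidef := by
    rw [hcast]
    exact (psd_smul hρ.1 h0).add (psd_smul hσ.1 h1δ)
  have hdm : IsDensityMatrix ((δ : ℂ) • ρ + (1 - (δ : ℂ)) • σ) := by
    refine ⟨hρδpsd, ?_⟩
    rw [Matrix.trace_add, Matrix.trace_smul, Matrix.trace_smul, hρ.2, hσ.2]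
    simp
  refine ⟨hdm, ?_, ?_⟩
  -- trace distance
  · have hXeq : (δ : ℂ) • ρ + (1 - (δ : ℂ)) • σ - σ = (δ:ℂ) • (ρ - σ) := by
      rw [sub_smul, one_smul, smul_sub]; abel
    have e1 : (ρ + σ) * (ρ + σ) = ρ * ρ + σ * σ := by
      rw [add_mul, mul_add, mul_add, horth, hsr]; abel
    have e2 : (ρ - σ) * (ρ - σ) = ρ * ρ + σ * σ := by
      rw [sub_mul, mul_sub, mul_sub, horth, hsr]; abel
    have hApsd : ((δ:ℂ) • (ρ + σ)).PosSemidef := psd_smul (hρ.1.add hσ.1) h0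
    have hkey : (δ:ℂ) • (ρ + σ) =
        (Matrix.posSemidef_conjTranspose_mul_self
          ((δ : ℂ) • ρ + (1 - (δ : ℂ)) • σ - σ)).sqrt := by
      apply hApsd.eq_sqrt_of_sq_eq
      rw [hXeq, Matrix.conjTranspose_smul, Matrix.conjTranspose_sub, hρ.1.1.eq, hσ.1.1.eq]
      rw [Complex.star_def, Complex.conj_ofReal]
      rw [pow_two, Matrix.smul_mul, Matrix.mul_smul, Matrix.smul_mul, Matrix.mul_smul,
        smul_smul, smul_smul, e1, e2]
    rw [trDist, traceNorm_eq_sqrt, ← hkey, Matrix.trace_smul, Matrix.trace_add, hρ.2, hσ.2]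
    simp; ring
  -- fidelity
  · set a := hρ.1.sqrt with ha
    set b := hσ.1.sqrt with hb
    have hab : a * b = 0 := sqrt_mul_sqrt_eq_zero hρ.1 hσ.1 horth
    have hba : b * a = 0 := sqrt_mul_sqrt_eq_zero hσ.1 hρ.1 hsr
    have haa : a * a = ρ := hρ.1.sqrt_mul_self
    have hbb : b * b = σ := hσ.1.sqrt_mul_self
    have haσ : a * σ = 0 := by rw [← hbb, ← Matrix.mul_assoc, hab, Matrix.zero_mul]
    have hσa : σ * a = 0 := by rw [← hbb, Matrix.mul_assoc, hba, Matrix.mul_zero]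
    have hbσb : b * σ * b = σ * σ := by rw [← hbb]; noncomm_ring
    set r1 := Real.sqrt δ with hr1
    set r2 := Real.sqrt (1 - δ) with hr2
    have c1 : (r1:ℂ) * (r1:ℂ) = (δ:ℂ) := by
      rw [← Complex.ofReal_mul, Real.mul_self_sqrt h0]
    have c2 : (r2:ℂ) * (r2:ℂ) = 1 - (δ:ℂ) := by
      rw [← Complex.ofReal_mul, Real.mul_self_sqrt h1δ]; push_cast; ring
    set S := (r1:ℂ) • a + (r2:ℂ) • b with hS
    have hSpsd : S.PosSemidef :=
      (psd_smul hρ.1.posSemidef_sqrt (Real.sqrt_nonneg _)).add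
        (psd_smul hσ.1.posSemidef_sqrt (Real.sqrt_nonneg _))
    have hS2 : S ^ 2 = (δ : ℂ) • ρ + (1 - (δ : ℂ)) • σ := by
      simp only [pow_two, hS, add_mul, mul_add, Matrix.smul_mul, Matrix.mul_smul,
        hab, hba, haa, hbb, smul_smul, smul_zero, add_zero, zero_add, c1, c2]
    have hmsq : msqrt ((δ : ℂ) • ρ + (1 - (δ : ℂ)) • σ) = S := by
      rw [msqrt, dif_pos hρδpsd]
      exact (hSpsd.eq_sqrt_of_sq_eq hρδpsd hS2).symm
    have hbσa : b * σ * a = 0 := by rw [Matrix.mul_assoc, hσa, Matrix.mul_zero]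
    have hM : S * σ * S = (1 - (δ:ℂ)) • (σ * σ) := by
      simp only [hS, add_mul, mul_add, Matrix.smul_mul, Matrix.mul_smul, haσ, hσa, hbσa,
        hbσb, smul_smul, smul_zero, zero_add, add_zero, c2]
    have hMpsd : ((1 - (δ:ℂ)) • (σ * σ)).PosSemidef := by
      rw [hcast]
      have := hσ.1.pow 2
      rw [pow_two] at this
      exact psd_smul this h1δ
    have houter : msqrt ((1 - (δ:ℂ)) • (σ * σ)) = (r2:ℂ) • σ := by
      rw [msqrt, dif_pos hMpsd]
      refine ((psd_smul hσ.1 (Real.sqrt_nonneg _)).eq_sqrt_of_sq_eq hMpsd ?_).symm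
      rw [pow_two, Matrix.smul_mul, Matrix.mul_smul, smul_smul, c2]
    rw [fidelity, hmsq, hM, houter, Matrix.trace_smul, hσ.2]
    simp

/-- **Failure of the linear Bures–trace bound for non-full-rank states.** -/
theorem no_linear_bures_trace_bound {d : ℕ}
    (σ ρ : Matrix (Fin d) (Fin d) ℂ)
    (hσ : IsDensityMatrix σ) (hρ : IsDensityMatrix ρ)
    (hrank : σ.rank < d) (horth : ρ * σ = 0) :
    (∀ δ : ℝ, 0 ≤ δ → δ ≤ 1 →
      trDist ((δ : ℂ) • ρ + (1 - (δ : ℂ)) • σ) σ = δ ∧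
      fidelity ((δ : ℂ) • ρ + (1 - (δ : ℂ)) • σ) σ = Real.sqrt (1 - δ) ∧
      trDist ((δ : ℂ) • ρ + (1 - (δ : ℂ)) • σ) σ ≤
        2 * buresDist ((δ : ℂ) • ρ + (1 - (δ : ℂ)) • σ) σ ^ 2) ∧
    ¬ ∃ (C ε : ℝ), 0 < C ∧ 0 < ε ∧
        ∀ ρ' : Matrix (Fin d) (Fin d) ℂ, IsDensityMatrix ρ' →
          trDist ρ' σ < ε → buresDist ρ' σ ≤ C * trDist ρ' σ := by
  constructor
  · intro δ h0 h1
    obtain ⟨hdm, htr, hfid⟩ := key_calc σ ρ hσ hρ horth δ h0 h1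
    refine ⟨htr, hfid, ?_⟩
    have h1δ : (0:ℝ) ≤ 1 - δ := by linarith
    have hs1 : Real.sqrt (1 - δ) ≤ 1 := Real.sqrt_le_one.mpr (by linarith)
    have hb : buresDist ((δ : ℂ) • ρ + (1 - (δ : ℂ)) • σ) σ ^ 2 = 1 - Real.sqrt (1 - δ) := by
      rw [buresDist, hfid, Real.sq_sqrt (by linarith)]
    rw [htr, hb]
    nlinarith [Real.sq_sqrt h1δ, Real.sqrt_nonneg (1 - δ)]
  · rintro ⟨C, ε, hC, hε, h⟩
    set δ := min ε (min 1 (1 / (2 * C ^ 2))) / 2 with hδdef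
    have hpos : (0:ℝ) < 1 / (2 * C ^ 2) := by positivity
    have hA : 0 < min ε (min 1 (1 / (2 * C ^ 2))) := lt_min hε (lt_min one_pos hpos)
    have hδ0 : 0 < δ := by positivity
    have hδε : δ < ε := by
      have h1 := min_le_left ε (min 1 (1 / (2 * C ^ 2)))
      rw [hδdef]; linarith
    have hδ1 : δ ≤ 1 := by
      have h1 := min_le_right ε (min 1 (1 / (2 * C ^ 2)))
      have h2 := min_le_left (1:ℝ) (1 / (2 * C ^ 2))
      rw [hδdef]; linarith
    have hδC : δ < 1 / (2 * C ^ 2) := by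
      have h1 := min_le_right ε (min 1 (1 / (2 * C ^ 2)))
      have h2 := min_le_right (1:ℝ) (1 / (2 * C ^ 2))
      rw [hδdef]; linarith
    obtain ⟨hdm, htr, hfid⟩ := key_calc σ ρ hσ hρ horth δ hδ0.le hδ1
    have hle := h _ hdm (by rw [htr]; exact hδε)
    rw [htr, buresDist, hfid] at hle
    have h1δ : (0:ℝ) ≤ 1 - δ := by linarith
    have A1 : Real.sqrt (1 - δ) ≤ 1 - δ / 2 := by
      have h2 : (1 - δ) ≤ (1 - δ / 2) ^ 2 := by nlinarith
      calc Real.sqrt (1 - δ) ≤ Real.sqrt ((1 - δ / 2) ^ 2) := Real.sqrt_le_sqrt h2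
      _ = 1 - δ / 2 := Real.sqrt_sq (by linarith)
    have A3 : Real.sqrt (δ / 2) ≤ Real.sqrt (1 - Real.sqrt (1 - δ)) :=
      Real.sqrt_le_sqrt (by linarith)
    have hClt : 2 * C ^ 2 * δ < 1 := by
      rw [lt_div_iff₀ (by positivity)] at hδC
      linarith
    have A4 : C * δ < Real.sqrt (δ / 2) := by
      have hsq : (C * δ) ^ 2 < δ / 2 := by
        nlinarith [mul_lt_mul_of_pos_left hClt hδ0]
      calc C * δ = Real.sqrt ((C * δ) ^ 2) := (Real.sqrt_sq (by positivity)).symm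
      _ < Real.sqrt (δ / 2) := Real.sqrt_lt_sqrt (by positivity) hsq
    linarith
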